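/- Let M ∈ ℕ. For all families (H_i)_{i∈ℤ}, (K_i)_{i∈ℤ} of complex Hilbert spaces with ℓ²-direct sums H, K, and every bounded linear operator T : H → K, there exists a bounded linear operator S : H → K whose matrix entries satisfy S_{ij} = γ_M(i,j)·T_{ij} for all i,j ∈ ℤ, and ‖S‖ ≤ ‖T‖. Here γ_M(i,j) := (M+1−|i−j|)/(M+1) if |i−j| ≤ M and γ_M(i,j) := 0 if |i−j| > M. -/

import Mathlib

set_option maxHeartbeats 1000000

open scoped ENNReal

/-- The Schur multiplier `γ_M(i,j) = (M+1−|i−j|)/(M+1)` for `|i−j| ≤ M`, and `0` otherwise. -/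
noncomputable def gammaMul (M : ℕ) (i j : ℤ) : ℝ :=
  if |i - j| ≤ (M : ℤ) then ((M : ℝ) + 1 - |(i : ℝ) - (j : ℝ)|) / ((M : ℝ) + 1) else 0

variable {H K : ℤ → Type} [∀ i, NormedAddCommGroup (H i)] [∀ i, InnerProductSpace ℂ (H i)]
  [∀ i, CompleteSpace (H i)] [∀ i, NormedAddCommGroup (K i)] [∀ i, InnerProductSpace ℂ (K i)]
  [∀ i, CompleteSpace (K i)]

/-- The `(i,j)` matrix entry `T_{ij} = P_i ∘ T ∘ ι_j : H_j → K_i` of a bounded operator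
between ℓ²-direct sums. -/
noncomputable def matrixEntry (T : lp H 2 →L[ℂ] lp K 2) (i j : ℤ) (v : H j) : K i :=
  T (lp.single 2 j v) i

open scoped NNReal

section IntCounting

lemma SchurAux.pred_char (N : ℤ) (hN : 0 < N) (a d : ℤ) (hd : 0 ≤ d) :
    ((a + d) / N = a / N) ↔ a % N < N - d := by
  have h0 : 0 ≤ a % N := Int.emod_nonneg _ hN.ne'
  have h1 : a + d = (a % N + d) + N * (a / N) := by
    have := Int.mul_ediv_add_emod a N; linarith
  rw [h1, Int.add_mul_ediv_left _ _ hN.ne', add_eq_right]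
  constructor
  · intro h2
    by_contra hc
    push_neg at hc
    have : 1 ≤ (a % N + d) / N := (Int.le_ediv_iff_mul_le hN).2 (by linarith)
    linarith
  · intro h
    exact Int.ediv_eq_zero_of_lt (by linarith) (by linarith)

lemma SchurAux.card_emod (N : ℕ) (hN : 0 < N) (j c : ℤ) :
    ((Finset.range N).filter (fun k : ℕ => (j + (k:ℤ)) % (N:ℤ) < c)).card
      = ((Finset.range N).filter (fun r : ℕ => (r:ℤ) < c)).card := by
  have hN' : (0:ℤ) < (N:ℤ) := by exact_mod_cast hN
  refine Finset.card_bij' (fun k _ => ((j + (k:ℤ)) % (N:ℤ)).toNat)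
    (fun r _ => (((r:ℤ) - j) % (N:ℤ)).toNat) ?_ ?_ ?_ ?_
  · intro k hk
    simp only [Finset.mem_filter, Finset.mem_range] at hk ⊢
    have h0 : 0 ≤ (j + (k:ℤ)) % (N:ℤ) := Int.emod_nonneg _ hN'.ne'
    have h1 : (j + (k:ℤ)) % (N:ℤ) < N := Int.emod_lt_of_pos _ hN'
    exact ⟨by omega, by rw [Int.toNat_of_nonneg h0]; exact hk.2⟩
  · intro r hr
    simp only [Finset.mem_filter, Finset.mem_range] at hr ⊢
    have h0 : 0 ≤ ((r:ℤ) - j) % (N:ℤ) := Int.emod_nonneg _ hN'.ne'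
    have h1 : ((r:ℤ) - j) % (N:ℤ) < N := Int.emod_lt_of_pos _ hN'
    have key : (j + ((((r:ℤ) - j) % (N:ℤ)).toNat : ℤ)) % (N:ℤ) = (r:ℤ) := by
      rw [Int.toNat_of_nonneg h0, Int.add_emod, Int.emod_emod_of_dvd _ dvd_rfl, ← Int.add_emod,
        show j + ((r:ℤ) - j) = (r:ℤ) by ring]
      exact Int.emod_eq_of_lt (by positivity) (by exact_mod_cast hr.1)
    exact ⟨by omega, by rw [key]; exact hr.2⟩
  · intro k hk
    simp only [Finset.mem_filter, Finset.mem_range] at hk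
    have h0 : 0 ≤ (j + (k:ℤ)) % (N:ℤ) := Int.emod_nonneg _ hN'.ne'
    have key : ((((j + (k:ℤ)) % (N:ℤ)).toNat : ℤ) - j) % (N:ℤ) = (k:ℤ) := by
      rw [Int.toNat_of_nonneg h0, Int.sub_emod, Int.emod_emod_of_dvd _ dvd_rfl, ← Int.sub_emod,
        show j + (k:ℤ) - j = (k:ℤ) by ring]
      exact Int.emod_eq_of_lt (by positivity) (by exact_mod_cast hk.1)
    omega
  · intro r hr
    simp only [Finset.mem_filter, Finset.mem_range] at hr
    have h0 : 0 ≤ ((r:ℤ) - j) % (N:ℤ) := Int.emod_nonneg _ hN'.ne'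
    have key : (j + ((((r:ℤ) - j) % (N:ℤ)).toNat : ℤ)) % (N:ℤ) = (r:ℤ) := by
      rw [Int.toNat_of_nonneg h0, Int.add_emod, Int.emod_emod_of_dvd _ dvd_rfl, ← Int.add_emod,
        show j + ((r:ℤ) - j) = (r:ℤ) by ring]
      exact Int.emod_eq_of_lt (by positivity) (by exact_mod_cast hr.1)
    omega

lemma SchurAux.count_aux (M : ℕ) (i j : ℤ) (hd : j ≤ i) :
    ((Finset.range (M+1)).filter
      (fun k : ℕ => (i + (k:ℤ)) / ((M:ℤ)+1) = (j + (k:ℤ)) / ((M:ℤ)+1))).card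
      = (((M:ℤ)+1) - |i - j|).toNat := by
  have hN : (0:ℤ) < (M:ℤ)+1 := by positivity
  have hpred : ∀ k : ℕ,
      ((i + (k:ℤ)) / ((M:ℤ)+1) = (j + (k:ℤ)) / ((M:ℤ)+1))
        ↔ (j + (k:ℤ)) % ((M:ℤ)+1) < ((M:ℤ)+1) - (i - j) := by
    intro k
    rw [show i + (k:ℤ) = (j + (k:ℤ)) + (i - j) by ring]
    exact SchurAux.pred_char _ hN _ _ (by omega)
  rw [Finset.filter_congr (fun k _ => hpred k),
    show ((M:ℤ)+1) = ((M+1 : ℕ) : ℤ) by push_cast; ring,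
    SchurAux.card_emod (M+1) (by omega) j _]
  have : (Finset.range (M+1)).filter (fun r : ℕ => (r:ℤ) < ((M+1:ℕ):ℤ) - (i - j))
      = Finset.range (min ((((M+1:ℕ):ℤ) - (i - j)).toNat) (M+1)) := by
    ext r
    simp only [Finset.mem_filter, Finset.mem_range, Nat.lt_min]
    omega
  rw [this, Finset.card_range, abs_of_nonneg (by omega : (0:ℤ) ≤ i - j)]
  omega

lemma SchurAux.count_lemma (M : ℕ) (i j : ℤ) :
    ((Finset.range (M+1)).filter
      (fun k : ℕ => (i + (k:ℤ)) / ((M:ℤ)+1) = (j + (k:ℤ)) / ((M:ℤ)+1))).card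
      = (((M:ℤ)+1) - |i - j|).toNat := by
  rcases le_total j i with h | h
  · exact SchurAux.count_aux M i j h
  · have hsym : ∀ k : ℕ,
        ((i + (k:ℤ)) / ((M:ℤ)+1) = (j + (k:ℤ)) / ((M:ℤ)+1))
          ↔ ((j + (k:ℤ)) / ((M:ℤ)+1) = (i + (k:ℤ)) / ((M:ℤ)+1)) := fun k => eq_comm
    rw [Finset.filter_congr (fun k _ => hsym k), SchurAux.count_aux M j i h, abs_sub_comm]

lemma SchurAux.gamma_eq (M : ℕ) (i j : ℤ) :
    (((M:ℝ)+1)⁻¹ : ℝ) * ((((M:ℤ)+1 - |i - j|).toNat : ℕ) : ℝ) = gammaMul M i j := by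
  rw [gammaMul]
  by_cases h : |i - j| ≤ (M : ℤ)
  · rw [if_pos h]
    have h0 : (0:ℤ) ≤ (M:ℤ)+1 - |i-j| := by omega
    have hcast : ((((M:ℤ)+1 - |i - j|).toNat : ℕ) : ℝ) = (M:ℝ) + 1 - |(i:ℝ) - (j:ℝ)| := by
      have h1 : ((((M:ℤ)+1 - |i - j|).toNat : ℕ) : ℤ) = (M:ℤ)+1 - |i - j| :=
        Int.toNat_of_nonneg h0
      have h2 : ((((M:ℤ)+1 - |i - j|).toNat : ℕ) : ℝ)
          = (((M:ℤ)+1 - |i - j| : ℤ) : ℝ) := by exact_mod_cast congrArg (Int.cast : ℤ → ℝ) h1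
      rw [h2]
      push_cast
      ring
    rw [hcast, inv_mul_eq_div]
  · rw [if_neg h, show ((M:ℤ)+1 - |i-j|).toNat = 0 by omega]
    simp

end IntCounting

section Helpers
set_option linter.unusedSectionVars false
variable {E : ℤ → Type} [∀ i, NormedAddCommGroup (E i)] [∀ i, NormedSpace ℂ (E i)]

lemma SchurAux.hconv (x : ℝ) (hx : 0 ≤ x) :
    ENNReal.ofReal (x ^ (2:ℝ≥0∞).toReal) = (ENNReal.ofReal x)^2 := by
  rw [ENNReal.toReal_ofNat, show (2:ℝ) = ((2:ℕ):ℝ) by norm_num, Real.rpow_natCast,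
    ENNReal.ofReal_pow hx]

lemma SchurAux.lp_tsum_sq (f : lp E 2) : ∑' i, ((‖f i‖₊ : ℝ≥0∞))^2 = ((‖f‖₊ : ℝ≥0∞))^2 := by
  have hp : (0:ℝ) < (2:ℝ≥0∞).toReal := by norm_num
  have hs : Summable fun i => ‖f i‖ ^ (2:ℝ≥0∞).toReal := (lp.memℓp f).summable hp
  have h1 : ‖f‖ ^ (2:ℝ≥0∞).toReal = ∑' i, ‖f i‖ ^ (2:ℝ≥0∞).toReal := lp.norm_rpow_eq_tsum hp f
  calc ∑' i, ((‖f i‖₊ : ℝ≥0∞))^2 = ∑' i, ENNReal.ofReal (‖f i‖ ^ (2:ℝ≥0∞).toReal) := by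
        refine tsum_congr fun i => ?_
        rw [SchurAux.hconv _ (norm_nonneg _), ← coe_nnnorm, ENNReal.ofReal_coe_nnreal]
    _ = ENNReal.ofReal (∑' i, ‖f i‖ ^ (2:ℝ≥0∞).toReal) :=
        (ENNReal.ofReal_tsum_of_nonneg (fun i => Real.rpow_nonneg (norm_nonneg _) _) hs).symm
    _ = ((‖f‖₊ : ℝ≥0∞))^2 := by
        rw [← h1, SchurAux.hconv _ (norm_nonneg _), ← coe_nnnorm, ENNReal.ofReal_coe_nnreal]

lemma SchurAux.memℓp_of_tsum_sq {g : ∀ i, E i} (h : ∑' i, ((‖g i‖₊ : ℝ≥0∞))^2 ≠ ⊤) :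
    Memℓp g 2 := by
  apply memℓp_gen
  have h' : (∑' i, ((‖g i‖₊^2 : ℝ≥0) : ℝ≥0∞)) ≠ ⊤ := by
    refine ne_of_eq_of_ne (tsum_congr fun i => ?_) h
    push_cast; ring
  have hs2 : Summable fun i => ((‖g i‖₊^2 : ℝ≥0) : ℝ) :=
    NNReal.summable_coe.2 (ENNReal.tsum_coe_ne_top_iff_summable.1 h')
  refine hs2.congr fun i => ?_
  rw [ENNReal.toReal_ofNat, show (2:ℝ) = ((2:ℕ):ℝ) by norm_num, Real.rpow_natCast]
  push_cast; ring

lemma SchurAux.lp_norm_le_of_tsum {f : lp E 2} {C : ℝ≥0}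
    (h : ∑' i, ((‖f i‖₊ : ℝ≥0∞))^2 ≤ ((C : ℝ≥0∞))^2) : ‖f‖ ≤ C := by
  rw [SchurAux.lp_tsum_sq, ← ENNReal.coe_pow, ← ENNReal.coe_pow, ENNReal.coe_le_coe] at h
  have : ‖f‖₊ ≤ C := by
    by_contra hc
    push_neg at hc
    exact absurd h (not_le.2 (pow_lt_pow_left₀ hc (zero_le : (0:ℝ≥0) ≤ C) two_ne_zero))
  exact_mod_cast this

noncomputable def SchurAux.blockEl (b : ℤ → ℤ) (m : ℤ) (x : lp E 2) : lp E 2 :=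
  ⟨fun i => if b i = m then x i else 0, by
    apply SchurAux.memℓp_of_tsum_sq
    refine ne_top_of_le_ne_top (by rw [SchurAux.lp_tsum_sq x]; exact ENNReal.coe_ne_top)
      (ENNReal.tsum_le_tsum fun i => ?_)
    by_cases h : b i = m <;> simp [h]⟩

lemma SchurAux.blockEl_apply (b : ℤ → ℤ) (m : ℤ) (x : lp E 2) (i : ℤ) :
    (SchurAux.blockEl b m x : ∀ i, E i) i = if b i = m then x i else 0 := rfl

lemma SchurAux.blockEl_add (b : ℤ → ℤ) (m : ℤ) (x y : lp E 2) :
    SchurAux.blockEl b m (x + y) = SchurAux.blockEl b m x + SchurAux.blockEl b m y := by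
  apply lp.ext; funext i
  simp only [lp.coeFn_add, Pi.add_apply, SchurAux.blockEl_apply]
  by_cases h : b i = m <;> simp [h, lp.coeFn_add]

lemma SchurAux.blockEl_smul (b : ℤ → ℤ) (m : ℤ) (c : ℂ) (x : lp E 2) :
    SchurAux.blockEl b m (c • x) = c • SchurAux.blockEl b m x := by
  apply lp.ext; funext i
  simp only [lp.coeFn_smul, Pi.smul_apply, SchurAux.blockEl_apply]
  by_cases h : b i = m <;> simp [h, lp.coeFn_smul]

lemma SchurAux.blockEl_tsum_le (b : ℤ → ℤ) (x : lp E 2) :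
    ∑' m, ((‖SchurAux.blockEl b m x‖₊ : ℝ≥0∞))^2 ≤ ((‖x‖₊ : ℝ≥0∞))^2 := by
  have h1 : ∀ m, ((‖SchurAux.blockEl b m x‖₊ : ℝ≥0∞))^2
      = ∑' i, (if b i = m then ((‖x i‖₊ : ℝ≥0∞))^2 else 0) := by
    intro m
    rw [← SchurAux.lp_tsum_sq]
    refine tsum_congr fun i => ?_
    by_cases h : b i = m <;> simp [SchurAux.blockEl_apply, h]
  calc ∑' m, ((‖SchurAux.blockEl b m x‖₊ : ℝ≥0∞))^2
      = ∑' (m) (i), (if b i = m then ((‖x i‖₊ : ℝ≥0∞))^2 else 0) := tsum_congr h1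
    _ = ∑' (i) (m), (if b i = m then ((‖x i‖₊ : ℝ≥0∞))^2 else 0) := ENNReal.tsum_comm
    _ = ∑' i, ((‖x i‖₊ : ℝ≥0∞))^2 := by
        refine tsum_congr fun i => ?_
        refine (tsum_congr fun m => if_congr eq_comm rfl rfl).trans (tsum_ite_eq (b i) _)
    _ = ((‖x‖₊ : ℝ≥0∞))^2 := SchurAux.lp_tsum_sq x
    _ ≤ ((‖x‖₊ : ℝ≥0∞))^2 := le_rfl

lemma SchurAux.blockEl_single (b : ℤ → ℤ) (m j : ℤ) (v : E j) :
    SchurAux.blockEl b m (lp.single 2 j v) = if b j = m then lp.single 2 j v else 0 := by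
  apply lp.ext; funext i
  rw [SchurAux.blockEl_apply, apply_ite (fun f : lp E 2 => (f : ∀ i, E i) i), lp.coeFn_zero,
    Pi.zero_apply]
  by_cases hij : i = j
  · subst hij
    by_cases h : b i = m <;> simp [h]
  · rw [lp.single_apply_ne 2 j v hij, ite_self, ite_self]

end Helpers

section Compress
variable {H' K' : ℤ → Type} [∀ i, NormedAddCommGroup (H' i)] [∀ i, NormedSpace ℂ (H' i)]
  [∀ i, NormedAddCommGroup (K' i)] [∀ i, NormedSpace ℂ (K' i)]

lemma SchurAux.compress_bound (b : ℤ → ℤ) (T : lp H' 2 →L[ℂ] lp K' 2) (x : lp H' 2) :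
    ∑' i, ((‖T (SchurAux.blockEl b (b i) x) i‖₊ : ℝ≥0∞))^2
      ≤ ((‖T‖₊ * ‖x‖₊ : ℝ≥0) : ℝ≥0∞)^2 := by
  set F : ℤ → ℝ≥0∞ := fun i => ((‖T (SchurAux.blockEl b (b i) x) i‖₊ : ℝ≥0∞))^2 with hF
  calc ∑' i, F i = ∑' (m) (i : b ⁻¹' {m}), F i := (ENNReal.tsum_fiberwise F b).symm
    _ ≤ ∑' m, ((‖T‖₊ : ℝ≥0∞) * (‖SchurAux.blockEl b m x‖₊ : ℝ≥0∞))^2 := by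
        refine ENNReal.tsum_le_tsum fun m => ?_
        have h1 : ∀ i : b ⁻¹' {m},
            F i = ((‖T (SchurAux.blockEl b m x) (i:ℤ)‖₊ : ℝ≥0∞))^2 := by
          rintro ⟨i, hi⟩
          have : b i = m := hi
          simp [hF, this]
        calc ∑' (i : b ⁻¹' {m}), F i
            = ∑' (i : b ⁻¹' {m}), ((‖T (SchurAux.blockEl b m x) (i:ℤ)‖₊ : ℝ≥0∞))^2 :=
              tsum_congr h1
          _ ≤ ∑' i : ℤ, ((‖T (SchurAux.blockEl b m x) i‖₊ : ℝ≥0∞))^2 :=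
              ENNReal.tsum_comp_le_tsum_of_injective Subtype.coe_injective _
          _ = ((‖T (SchurAux.blockEl b m x)‖₊ : ℝ≥0∞))^2 := SchurAux.lp_tsum_sq _
          _ ≤ ((‖T‖₊ : ℝ≥0∞) * (‖SchurAux.blockEl b m x‖₊ : ℝ≥0∞))^2 := by
              gcongr
              exact_mod_cast T.le_opNNNorm _
    _ = (‖T‖₊ : ℝ≥0∞)^2 * ∑' m, ((‖SchurAux.blockEl b m x‖₊ : ℝ≥0∞))^2 := by
        rw [← ENNReal.tsum_mul_left]; simp [mul_pow]
    _ ≤ (‖T‖₊ : ℝ≥0∞)^2 * ((‖x‖₊ : ℝ≥0∞))^2 := by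
        gcongr; exact SchurAux.blockEl_tsum_le b x
    _ = ((‖T‖₊ * ‖x‖₊ : ℝ≥0) : ℝ≥0∞)^2 := by push_cast; ring

noncomputable def SchurAux.compressL (b : ℤ → ℤ) (T : lp H' 2 →L[ℂ] lp K' 2) :
    lp H' 2 →L[ℂ] lp K' 2 :=
  LinearMap.mkContinuous
    { toFun := fun x => ⟨fun i => T (SchurAux.blockEl b (b i) x) i,
        SchurAux.memℓp_of_tsum_sq
          (ne_top_of_le_ne_top (by exact ENNReal.coe_pow _ _ ▸ ENNReal.coe_ne_top)
          (SchurAux.compress_bound b T x))⟩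
      map_add' := fun x y => by
        apply lp.ext; funext i
        simp only [lp.coeFn_add, Pi.add_apply]
        rw [SchurAux.blockEl_add, map_add, lp.coeFn_add, Pi.add_apply]
      map_smul' := fun c x => by
        apply lp.ext; funext i
        simp only [lp.coeFn_smul, Pi.smul_apply, RingHom.id_apply]
        rw [SchurAux.blockEl_smul, map_smul, lp.coeFn_smul, Pi.smul_apply] }
    ‖T‖
    (fun x => by
      refine le_trans
        (SchurAux.lp_norm_le_of_tsum (C := ‖T‖₊ * ‖x‖₊) (SchurAux.compress_bound b T x)) ?_
      push_cast
      exact le_rfl)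

lemma SchurAux.compressL_norm_le (b : ℤ → ℤ) (T : lp H' 2 →L[ℂ] lp K' 2) :
    ‖SchurAux.compressL b T‖ ≤ ‖T‖ :=
  LinearMap.mkContinuous_norm_le _ (norm_nonneg T) _

lemma SchurAux.compressL_single (b : ℤ → ℤ) (T : lp H' 2 →L[ℂ] lp K' 2) (i j : ℤ) (v : H' j) :
    (SchurAux.compressL b T (lp.single 2 j v)) i
      = if b i = b j then (T (lp.single 2 j v)) i else 0 := by
  have : (SchurAux.compressL b T (lp.single 2 j v)) i
      = T (SchurAux.blockEl b (b i) (lp.single 2 j v)) i := rfl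
  rw [this, SchurAux.blockEl_single]
  by_cases h : b j = b i
  · rw [if_pos h, if_pos h.symm]
  · rw [if_neg h, if_neg (fun h' => h h'.symm), map_zero, lp.coeFn_zero, Pi.zero_apply]

end Compress

/-- For `M ∈ ℕ`, every bounded operator `T : ⊕_{i∈ℤ} H_i → ⊕_{i∈ℤ} K_i` between ℓ²-direct
sums of Hilbert spaces admits a bounded operator `S` with matrix entries
`S_{ij} = γ_M(i,j)·T_{ij}` and `‖S‖ ≤ ‖T‖`. -/
theorem statement9 (M : ℕ) (T : lp H 2 →L[ℂ] lp K 2) :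
    ∃ S : lp H 2 →L[ℂ] lp K 2,
      (∀ (i j : ℤ) (v : H j),
        matrixEntry S i j v = (gammaMul M i j : ℂ) • matrixEntry T i j v) ∧
      ‖S‖ ≤ ‖T‖ := by
  have hM : (0:ℝ) < (M:ℝ)+1 := by positivity
  refine ⟨((((M:ℝ)+1)⁻¹ : ℝ) : ℂ) • ∑ k ∈ Finset.range (M+1),
      SchurAux.compressL (fun i => (i + (k:ℤ)) / ((M:ℤ)+1)) T, ?_, ?_⟩
  · intro i j v
    have step1 : matrixEntry (((((M:ℝ)+1)⁻¹ : ℝ) : ℂ) • ∑ k ∈ Finset.range (M+1),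
        SchurAux.compressL (fun i => (i + (k:ℤ)) / ((M:ℤ)+1)) T) i j v
        = ((((M:ℝ)+1)⁻¹ : ℝ) : ℂ) • ∑ k ∈ Finset.range (M+1),
            (SchurAux.compressL (fun i => (i + (k:ℤ)) / ((M:ℤ)+1)) T (lp.single 2 j v)) i := by
      rw [matrixEntry, ContinuousLinearMap.smul_apply, lp.coeFn_smul, Pi.smul_apply,
        ContinuousLinearMap.sum_apply, lp.coeFn_sum, Finset.sum_apply]
    have h3 : ∑ k ∈ Finset.range (M+1),
        (SchurAux.compressL (fun i => (i + (k:ℤ)) / ((M:ℤ)+1)) T (lp.single 2 j v)) i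
        = ∑ k ∈ Finset.range (M+1),
          (if (i + (k:ℤ)) / ((M:ℤ)+1) = (j + (k:ℤ)) / ((M:ℤ)+1)
            then (T (lp.single 2 j v)) i else 0) :=
      Finset.sum_congr rfl (fun k _ =>
        SchurAux.compressL_single (fun i => (i + (k:ℤ)) / ((M:ℤ)+1)) T i j v)
    rw [step1, h3]
    have step2 : ∑ k ∈ Finset.range (M+1),
        (if (i + (k:ℤ)) / ((M:ℤ)+1) = (j + (k:ℤ)) / ((M:ℤ)+1)
          then (T (lp.single 2 j v)) i else 0)
        = (((Finset.range (M+1)).filter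
            (fun k : ℕ => (i + (k:ℤ)) / ((M:ℤ)+1) = (j + (k:ℤ)) / ((M:ℤ)+1))).card : ℕ)
            • (T (lp.single 2 j v)) i := by
      rw [← Finset.sum_filter, Finset.sum_const]
    rw [step2, SchurAux.count_lemma M i j, ← Nat.cast_smul_eq_nsmul ℂ, smul_smul]
    rw [matrixEntry]
    congr 1
    rw [← SchurAux.gamma_eq M i j]
    push_cast
    ring
  · refine ContinuousLinearMap.opNorm_le_bound _ (norm_nonneg T) fun x => ?_
    rw [ContinuousLinearMap.smul_apply, ContinuousLinearMap.sum_apply, norm_smul]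
    have h1 : ‖((((M:ℝ)+1)⁻¹ : ℝ) : ℂ)‖ = ((M:ℝ)+1)⁻¹ := by
      rw [Complex.norm_real, Real.norm_eq_abs, abs_of_nonneg (by positivity)]
    have h2 : ‖∑ k ∈ Finset.range (M+1),
        SchurAux.compressL (fun i => (i + (k:ℤ)) / ((M:ℤ)+1)) T x‖ ≤ ((M:ℝ)+1) * (‖T‖ * ‖x‖) := by
      refine le_trans (norm_sum_le _ _) ?_
      refine le_trans (Finset.sum_le_card_nsmul _ _ (‖T‖ * ‖x‖) fun k _ => ?_) ?_
      · exact le_trans (ContinuousLinearMap.le_opNorm _ _)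
          (mul_le_mul_of_nonneg_right (SchurAux.compressL_norm_le _ T) (norm_nonneg x))
      · rw [Finset.card_range, nsmul_eq_mul]
        push_cast
        exact le_rfl
    calc ‖((((M:ℝ)+1)⁻¹ : ℝ) : ℂ)‖ * ‖∑ k ∈ Finset.range (M+1),
          SchurAux.compressL (fun i => (i + (k:ℤ)) / ((M:ℤ)+1)) T x‖
        ≤ ((M:ℝ)+1)⁻¹ * (((M:ℝ)+1) * (‖T‖ * ‖x‖)) := by
          rw [h1]; exact mul_le_mul_of_nonneg_left h2 (by positivity)
      _ = ‖T‖ * ‖x‖ := by field_simp
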